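/- Let n = 2ℓ with ℓ ≥ 2, let D ⊆ F_2^n be the even-weight code, and let C ⊆ D contain exactly one point from each pair {x, −x} of antipodal points of D. Then C is an (ℓ−1, ℓ−1)-design in F_2^n with |C| = 2^{2ℓ−2} = ∑_{i=0}^{ℓ−1} C(2ℓ−1, i); in particular C is a tight (ℓ−1, ℓ−1)-design. -/

import Mathlib

open Finset

/-- The Krawtchouk polynomials `Q_i^{(n)}(t)`, determined by `Q_0 = 1`, `Q_1 = t` and the
three-term recurrence `n·t·Q_i(t) = (n−i)·Q_{i+1}(t) + i·Q_{i−1}(t)`. -/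
noncomputable def kraw (n : ℕ) : ℕ → ℝ → ℝ
  | 0, _ => 1
  | 1, t => t
  | (i+2), t =>
      ((n : ℝ) * t * kraw n (i+1) t - ((i : ℝ) + 1) * kraw n i t) / ((n : ℝ) - ((i : ℝ) + 1))

/-- The "inner product" `⟨x,y⟩ = 1 − 2 d(x,y)/n`. -/
noncomputable def ip (n : ℕ) (x y : Fin n → ZMod 2) : ℝ :=
  1 - 2 * (hammingDist x y : ℝ) / (n : ℝ)

/-- The `i`-th moment `M_i(C) = ∑_{x,y ∈ C} Q_i^{(n)}(⟨x,y⟩)`. -/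
noncomputable def moment (n : ℕ) (C : Finset (Fin n → ZMod 2)) (i : ℕ) : ℝ :=
  ∑ x ∈ C, ∑ y ∈ C, kraw n i (ip n x y)

/-- The antipodal (complement) point `−x`. -/
def antip {n : ℕ} (x : Fin n → ZMod 2) : Fin n → ZMod 2 := fun j => x j + 1

/-- `C` is a `(k,k)`-design: a nonempty code with `M_i(C) = 0` for all even `i` with `2 ≤ i ≤ 2k`. -/
def IsKKDesign (n k : ℕ) (C : Finset (Fin n → ZMod 2)) : Prop :=
  C.Nonempty ∧ ∀ j : ℕ, 1 ≤ j → j ≤ k → moment n C (2 * j) = 0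

/-- `C` is an `m`-design: a nonempty code with `M_i(C) = 0` for all `1 ≤ i ≤ m`. -/
def IsMDesign (n m : ℕ) (C : Finset (Fin n → ZMod 2)) : Prop :=
  C.Nonempty ∧ ∀ i : ℕ, 1 ≤ i → i ≤ m → moment n C i = 0

/-- Generalized binomial coefficient `C(z,j)` for real `z`. -/
noncomputable def gchoose (z : ℝ) (j : ℕ) : ℝ :=
  (∏ i ∈ Finset.range j, (z - (i : ℝ))) / (Nat.factorial j : ℝ)

/-- The Krawtchouk polynomial `K_i^{(m)}(z)` in the variable `z`. -/
noncomputable def krawK (m i : ℕ) (z : ℝ) : ℝ :=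
  ∑ j ∈ Finset.range (i + 1), (-1 : ℝ) ^ j * gchoose z j * gchoose ((m : ℝ) - z) (i - j)

/-- The adjacent polynomial `Q_i^{1,1}(t) = K_i^{(n−2)}(n(1−t)/2 − 1) / ∑_{j=0}^i C(n−1,j)`. -/
noncomputable def Q11 (n i : ℕ) (t : ℝ) : ℝ :=
  krawK (n - 2) i ((n : ℝ) * (1 - t) / 2 - 1) /
    (∑ j ∈ Finset.range (i + 1), ((n - 1).choose j : ℝ))



noncomputable def sg (a : ZMod 2) : ℝ := if a = 0 then 1 else -1

lemma sg_zero : sg 0 = 1 := by simp [sg]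
lemma sg_one : sg 1 = -1 := by norm_num [sg]
lemma zmod2_cases (a : ZMod 2) : a = 0 ∨ a = 1 := by
  fin_cases a
  · left; rfl
  · right; rfl
lemma sg_add (a b : ZMod 2) : sg (a + b) = sg a * sg b := by
  have h2 : (1 + 1 : ZMod 2) = 0 := by decide
  rcases zmod2_cases a with h | h <;> rcases zmod2_cases b with h' | h' <;>
    subst h <;> subst h' <;> simp [sg, h2] <;> norm_num

noncomputable def chi {n : ℕ} (z v : Fin n → ZMod 2) : ℝ := ∏ j, sg (z j * v j)

lemma chi_add_right {n : ℕ} (z v w : Fin n → ZMod 2) :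
    chi z (v + w) = chi z v * chi z w := by
  simp only [chi, ← Finset.prod_mul_distrib]
  refine Finset.prod_congr rfl fun j _ => ?_
  rw [Pi.add_apply, mul_add, sg_add]

lemma chi_add_left {n : ℕ} (z w v : Fin n → ZMod 2) :
    chi (z + w) v = chi z v * chi w v := by
  simp only [chi, ← Finset.prod_mul_distrib]
  refine Finset.prod_congr rfl fun j _ => ?_
  rw [Pi.add_apply, add_mul, sg_add]

lemma sum_sg {n : ℕ} (v : Fin n → ZMod 2) :
    ∑ j, sg (v j) = (n : ℝ) - 2 * hammingNorm v := by
  have h : ∀ j, sg (v j) = 1 - 2 * (if v j ≠ 0 then (1:ℝ) else 0) := by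
    intro j; rcases zmod2_cases (v j) with h | h <;> rw [h] <;> norm_num [sg]
  rw [Finset.sum_congr rfl fun j _ => h j, Finset.sum_sub_distrib]
  rw [← Finset.mul_sum, Finset.sum_ite, Finset.sum_const, Finset.sum_const]
  simp [hammingNorm]

lemma zmod2_ne_zero (a : ZMod 2) : a ≠ 0 ↔ a = 1 := by
  rcases zmod2_cases a with h | h <;> subst h <;> simp
lemma zmod2_add_one_ne (a : ZMod 2) : a + 1 ≠ 0 ↔ a = 0 := by
  have h2 : (1 + 1 : ZMod 2) = 0 := by decide
  rcases zmod2_cases a with h | h <;> subst h <;> simp [h2]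
lemma zmod2_add_self (a : ZMod 2) : a + a = 0 := by
  rcases zmod2_cases a with h | h <;> subst h <;> decide

lemma pflip_flip {n : ℕ} (z : Fin n → ZMod 2) (j : Fin n) :
    (z + (Pi.single j 1 : Fin n → ZMod 2)) + (Pi.single j 1 : Fin n → ZMod 2) = z := by
  rw [add_assoc]
  have : (Pi.single j 1 : Fin n → ZMod 2) + (Pi.single j 1 : Fin n → ZMod 2) = 0 := by
    funext k; simp [zmod2_add_self]
  rw [this, add_zero]

lemma chi_flip {n : ℕ} (z v : Fin n → ZMod 2) (j : Fin n) :
    chi (z + (Pi.single j 1 : Fin n → ZMod 2)) v = chi z v * sg (v j) := by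
  rw [chi_add_left]
  congr 1
  rw [chi]
  rw [Finset.prod_eq_single j]
  · simp
  · intro k _ hk; rw [Pi.single_eq_of_ne hk]; simp [sg_zero]
  · simp

lemma norm_filter {n : ℕ} (z : Fin n → ZMod 2) :
    hammingNorm z = (Finset.univ.filter (fun k => z k ≠ 0)).card := by
  rfl

lemma norm_flip_zero {n : ℕ} (z : Fin n → ZMod 2) (j : Fin n) (h : z j = 0) :
    hammingNorm (z + (Pi.single j 1 : Fin n → ZMod 2)) = hammingNorm z + 1 := by
  rw [norm_filter, norm_filter]
  have : Finset.univ.filter (fun k => (z + (Pi.single j 1 : Fin n → ZMod 2)) k ≠ 0) =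
      insert j (Finset.univ.filter (fun k => z k ≠ 0)) := by
    ext k
    by_cases hk : k = j
    · subst hk; simp [h, zmod2_add_one_ne]
    · simp [hk, Pi.single_eq_of_ne hk]
  rw [this, Finset.card_insert_of_notMem (by simp [h])]

lemma norm_flip_one {n : ℕ} (z : Fin n → ZMod 2) (j : Fin n) (h : z j ≠ 0) :
    hammingNorm (z + (Pi.single j 1 : Fin n → ZMod 2)) + 1 = hammingNorm z := by
  have h1 : z j = 1 := (zmod2_ne_zero _).1 h
  have h0 : (z + (Pi.single j 1 : Fin n → ZMod 2)) j = 0 := by simp [h1]; decide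
  have := norm_flip_zero (z + (Pi.single j 1 : Fin n → ZMod 2)) j h0
  rw [pflip_flip] at this
  omega

noncomputable def FF (n i : ℕ) (v : Fin n → ZMod 2) : ℝ :=
  ∑ z ∈ Finset.univ.filter (fun z : Fin n → ZMod 2 => hammingNorm z = i), chi z v

lemma norm_le {n : ℕ} (w : Fin n → ZMod 2) : hammingNorm w ≤ n := by
  rw [norm_filter]
  calc (Finset.univ.filter (fun k => w k ≠ 0)).card ≤ (Finset.univ : Finset (Fin n)).card :=
        Finset.card_filter_le _ _
    _ = n := by simp

lemma card_zero_filter {n : ℕ} (w : Fin n → ZMod 2) :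
    (Finset.univ.filter (fun j => w j = 0)).card = n - hammingNorm w := by
  have h := Finset.card_filter_add_card_filter_not
    (s := (Finset.univ : Finset (Fin n))) (p := fun j => w j ≠ 0)
  simp only [not_not, Finset.card_univ, Fintype.card_fin] at h
  rw [norm_filter]
  omega

lemma FF_rec {n : ℕ} (v : Fin n → ZMod 2) (i : ℕ) (hi : 1 ≤ i) :
    ((n : ℝ) - 2 * hammingNorm v) * FF n i v
      = ((i : ℝ) + 1) * FF n (i+1) v + ((n : ℝ) - (i : ℝ) + 1) * FF n (i-1) v := by
  have e1 : ((n : ℝ) - 2 * hammingNorm v) * FF n i v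
      = ∑ z ∈ Finset.univ.filter (fun z : Fin n → ZMod 2 => hammingNorm z = i),
          ∑ j, chi (z + (Pi.single j 1 : Fin n → ZMod 2)) v := by
    rw [FF, Finset.mul_sum]
    refine Finset.sum_congr rfl fun z _ => ?_
    rw [← sum_sg v, Finset.sum_mul]
    refine Finset.sum_congr rfl fun j _ => ?_
    rw [chi_flip, mul_comm]
  rw [e1, Finset.sum_comm]
  have e2 : ∀ j : Fin n,
      (∑ z ∈ Finset.univ.filter (fun z : Fin n → ZMod 2 => hammingNorm z = i),
        chi (z + (Pi.single j 1 : Fin n → ZMod 2)) v)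
      = ∑ w : Fin n → ZMod 2,
          (if hammingNorm (w + (Pi.single j 1 : Fin n → ZMod 2)) = i then chi w v else 0) := by
    intro j
    rw [← Finset.sum_filter]
    refine Finset.sum_nbij' (fun z => z + (Pi.single j 1 : Fin n → ZMod 2))
      (fun w => w + (Pi.single j 1 : Fin n → ZMod 2)) ?_ ?_ ?_ ?_ ?_
    · intro z hz
      simp only [Finset.mem_filter, Finset.mem_univ, true_and] at hz ⊢
      rw [pflip_flip]; exact hz
    · intro w hw
      simp only [Finset.mem_filter, Finset.mem_univ, true_and] at hw ⊢
      exact hw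
    · intro z _; exact pflip_flip z j
    · intro w _; exact pflip_flip w j
    · intro z _; rfl
  rw [Finset.sum_congr rfl (fun j _ => e2 j), Finset.sum_comm]
  have e3 : ∀ w : Fin n → ZMod 2,
      (∑ j, if hammingNorm (w + (Pi.single j 1 : Fin n → ZMod 2)) = i then chi w v else 0)
      = (if hammingNorm w = i + 1 then ((i:ℝ)+1) * chi w v else 0)
        + (if hammingNorm w = i - 1 then ((n:ℝ) - (i:ℝ) + 1) * chi w v else 0) := by
    intro w
    by_cases h1 : hammingNorm w = i + 1
    · have hcond : ∀ j : Fin n,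
          (hammingNorm (w + (Pi.single j 1 : Fin n → ZMod 2)) = i) ↔ w j ≠ 0 := by
        intro j
        constructor
        · intro hj
          intro h0
          have := norm_flip_zero w j h0
          omega
        · intro h0
          have := norm_flip_one w j h0
          omega
      rw [Finset.sum_congr rfl (fun j _ => by rw [if_congr (hcond j) rfl rfl])]
      rw [← Finset.sum_filter, Finset.sum_const, nsmul_eq_mul, ← norm_filter, h1]
      rw [if_pos rfl, if_neg (show ¬ i + 1 = i - 1 by omega), add_zero]
      push_cast
      ring
    · by_cases h2 : hammingNorm w = i - 1
      · have hcond : ∀ j : Fin n,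
            (hammingNorm (w + (Pi.single j 1 : Fin n → ZMod 2)) = i) ↔ w j = 0 := by
          intro j
          constructor
          · intro hj
            by_contra h0
            have := norm_flip_one w j h0
            omega
          · intro h0
            have := norm_flip_zero w j h0
            omega
        rw [Finset.sum_congr rfl (fun j _ => by rw [if_congr (hcond j) rfl rfl])]
        rw [← Finset.sum_filter, Finset.sum_const, nsmul_eq_mul, card_zero_filter, h2]
        rw [if_neg (show ¬ i - 1 = i + 1 by omega), if_pos rfl, zero_add]
        have hle : i - 1 ≤ n := le_trans (le_of_eq h2.symm) (norm_le w)
        have hc : ((n - (i-1) : ℕ) : ℝ) = (n : ℝ) - (i : ℝ) + 1 := by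
          rw [Nat.cast_sub hle, Nat.cast_sub hi]
          push_cast
          ring
        rw [hc]
      · have hcond : ∀ j : Fin n,
            ¬ (hammingNorm (w + (Pi.single j 1 : Fin n → ZMod 2)) = i) := by
          intro j
          by_cases h0 : w j = 0
          · have := norm_flip_zero w j h0
            omega
          · have := norm_flip_one w j h0
            omega
        rw [Finset.sum_eq_zero (fun j _ => by rw [if_neg (hcond j)])]
        rw [if_neg h1, if_neg h2, add_zero]
  rw [Finset.sum_congr rfl (fun w _ => e3 w), Finset.sum_add_distrib]
  congr 1
  · rw [← Finset.sum_filter, FF, Finset.mul_sum]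
  · rw [← Finset.sum_filter, FF, Finset.mul_sum]

lemma chi_zero_left {n : ℕ} (v : Fin n → ZMod 2) : chi 0 v = 1 := by
  simp [chi, sg_zero]

lemma norm_eq_zero_iff {n : ℕ} (w : Fin n → ZMod 2) : hammingNorm w = 0 ↔ w = 0 := by
  rw [norm_filter, Finset.card_eq_zero, Finset.filter_eq_empty_iff]
  constructor
  · intro h; funext k; have := h (Finset.mem_univ k); simpa using this
  · intro h k _; simp [h]

lemma FF_zero {n : ℕ} (v : Fin n → ZMod 2) : FF n 0 v = 1 := by
  rw [FF]
  have : Finset.univ.filter (fun z : Fin n → ZMod 2 => hammingNorm z = 0) = {0} := by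
    ext z; simp [norm_eq_zero_iff]
  rw [this, Finset.sum_singleton, chi_zero_left]

lemma norm_single {n : ℕ} (j : Fin n) : hammingNorm (Pi.single j 1 : Fin n → ZMod 2) = 1 := by
  have := norm_flip_zero (0 : Fin n → ZMod 2) j rfl
  rw [zero_add] at this
  rw [this, (norm_eq_zero_iff _).2 rfl]

lemma FF_one {n : ℕ} (v : Fin n → ZMod 2) :
    FF n 1 v = (n : ℝ) - 2 * hammingNorm v := by
  rw [FF, ← sum_sg v]
  symm
  refine Finset.sum_bij (fun j _ => (Pi.single j 1 : Fin n → ZMod 2)) ?_ ?_ ?_ ?_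
  · intro j _; simp [norm_single j]
  · intro j _ k _ h
    by_contra hjk
    have h' : (Pi.single j 1 : Fin n → ZMod 2) j = (Pi.single k 1 : Fin n → ZMod 2) j := by
      exact congrFun h j
    rw [Pi.single_eq_same, Pi.single_eq_of_ne hjk] at h'
    exact one_ne_zero h'
  · intro w hw
    simp only [Finset.mem_filter, Finset.mem_univ, true_and] at hw
    have h1 : (Finset.univ.filter (fun k => w k ≠ 0)).card = 1 := by rw [← norm_filter, hw]
    obtain ⟨j, hj⟩ := Finset.card_eq_one.1 h1
    refine ⟨j, Finset.mem_univ j, ?_⟩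
    funext k
    by_cases hk : k = j
    · subst hk
      have hmem : k ∈ Finset.univ.filter (fun k' => w k' ≠ 0) := by
        rw [hj]; exact Finset.mem_singleton_self k
      simp only [Finset.mem_filter] at hmem
      show (Pi.single k 1 : Fin n → ZMod 2) k = w k
      rw [Pi.single_eq_same, ((zmod2_ne_zero _).1 hmem.2)]
    · have hnm : k ∉ Finset.univ.filter (fun k' => w k' ≠ 0) := by
        rw [hj]; simp [hk]
      simp only [Finset.mem_filter, Finset.mem_univ, true_and, not_not] at hnm
      show (Pi.single j 1 : Fin n → ZMod 2) k = w k
      rw [Pi.single_eq_of_ne hk, hnm]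
  · intro j _
    have := chi_flip 0 v j
    rw [zero_add, chi_zero_left, one_mul] at this
    exact this.symm

lemma kraw_eq {n : ℕ} (v : Fin n → ZMod 2) : ∀ i, i < n →
    kraw n i (1 - 2 * (hammingNorm v : ℝ) / n) = FF n i v / (n.choose i : ℝ) := by
  intro i
  induction i using Nat.strong_induction_on with
  | _ i ih =>
    match i with
    | 0 => intro _; simp [kraw, FF_zero]
    | 1 =>
      intro hn
      have hn0 : (n : ℝ) ≠ 0 := Nat.cast_ne_zero.2 (by omega)
      rw [show kraw n 1 (1 - 2 * (hammingNorm v : ℝ) / n) = 1 - 2 * (hammingNorm v : ℝ) / n from rfl]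
      rw [FF_one, Nat.choose_one_right]
      field_simp
    | (i+2) =>
      intro hn
      have h1 := ih (i+1) (by omega) (by omega)
      have h0 := ih i (by omega) (by omega)
      have hn0 : (n : ℝ) ≠ 0 := Nat.cast_ne_zero.2 (by omega)
      have hrec := FF_rec v (i+1) (by omega)
      have hB1 : ((n.choose (i+1) : ℝ)) * ((i:ℝ)+1) = (n.choose i : ℝ) * ((n:ℝ) - i) := by
        have := Nat.choose_succ_right_eq n i
        have hc : ((n.choose (i+1) * (i+1) : ℕ) : ℝ) = ((n.choose i * (n - i) : ℕ) : ℝ) := by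
          exact_mod_cast congrArg (Nat.cast (R := ℝ)) this
        push_cast [Nat.cast_sub (by omega : i ≤ n)] at hc
        linarith [hc]
      have hB2 : ((n.choose (i+2) : ℝ)) * ((i:ℝ)+2) = (n.choose (i+1) : ℝ) * ((n:ℝ) - i - 1) := by
        have := Nat.choose_succ_right_eq n (i+1)
        have hc : ((n.choose (i+2) * (i+2) : ℕ) : ℝ) = ((n.choose (i+1) * (n - (i+1)) : ℕ) : ℝ) := by
          exact_mod_cast congrArg (Nat.cast (R := ℝ)) this
        push_cast [Nat.cast_sub (by omega : i + 1 ≤ n)] at hc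
        linarith [hc]
      have hC0 : (n.choose i : ℝ) ≠ 0 := Nat.cast_ne_zero.2 (Nat.choose_pos (by omega)).ne'
      have hC1 : (n.choose (i+1) : ℝ) ≠ 0 := Nat.cast_ne_zero.2 (Nat.choose_pos (by omega)).ne'
      have hC2 : (n.choose (i+2) : ℝ) ≠ 0 := Nat.cast_ne_zero.2 (Nat.choose_pos (by omega)).ne'
      have hNI : ((n:ℝ) - ((i:ℝ)+1)) ≠ 0 := by
        have : ((i:ℝ)+1) < (n:ℝ) := by exact_mod_cast (by omega : i+1 < n)
        linarith
      rw [kraw, h1, h0]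
      have ht : (n:ℝ) * (1 - 2 * (hammingNorm v : ℝ) / n) = (n:ℝ) - 2 * (hammingNorm v : ℝ) := by
        field_simp
      rw [div_eq_div_iff hNI hC2]
      rw [show i+1+1 = i+2 from rfl, show i+1-1 = i from rfl] at hrec
      push_cast at hrec
      field_simp
      linear_combination ((n.choose i : ℝ) * (n.choose (i+2) : ℝ)) * hrec
        - (FF n i v * (n.choose (i+2) : ℝ)) * hB1 + (FF n (i+2) v * (n.choose i : ℝ)) * hB2

lemma sg_sum {α : Type*} (s : Finset α) (f : α → ZMod 2) :
    sg (∑ j ∈ s, f j) = ∏ j ∈ s, sg (f j) := by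
  classical
  induction s using Finset.induction_on with
  | empty => simp [sg_zero]
  | insert _ _ h ih => rw [Finset.sum_insert h, Finset.prod_insert h, sg_add, ih]

lemma chi_one_right {n : ℕ} (z : Fin n → ZMod 2) :
    chi z 1 = sg ((hammingNorm z : ZMod 2)) := by
  have hsum : ((hammingNorm z : ZMod 2)) = ∑ j, z j := by
    rw [norm_filter]
    rw [← Finset.sum_filter_ne_zero (f := z)]
    rw [Finset.sum_congr rfl (fun j hj => (zmod2_ne_zero (z j)).1 (Finset.mem_filter.1 hj).2)]
    rw [Finset.sum_const, nsmul_eq_mul, mul_one]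
  rw [hsum, sg_sum]
  rw [chi]
  exact Finset.prod_congr rfl (fun j _ => by rw [Pi.one_apply, mul_one])

lemma chi_one_left {n : ℕ} (x : Fin n → ZMod 2) :
    chi 1 x = sg ((hammingNorm x : ZMod 2)) := by
  rw [← chi_one_right]
  rw [chi, chi]
  exact Finset.prod_congr rfl (fun j _ => by rw [Pi.one_apply, mul_one, one_mul])

lemma zmod2_univ : (Finset.univ : Finset (ZMod 2)) = {0, 1} := by decide

lemma sum_chi_univ {n : ℕ} (u : Fin n → ZMod 2) (hu : u ≠ 0) :
    ∑ x : Fin n → ZMod 2, chi u x = 0 := by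
  have hfac : ∏ j, (∑ a : ZMod 2, sg (u j * a)) = ∑ x : Fin n → ZMod 2, chi u x :=
    Fintype.prod_sum (fun j a => sg (u j * a))
  rw [← hfac]
  obtain ⟨j0, hj0⟩ : ∃ j0, u j0 ≠ 0 := by
    by_contra h
    push_neg at h
    exact hu (funext h)
  refine Finset.prod_eq_zero (Finset.mem_univ j0) ?_
  rw [zmod2_univ, Finset.sum_insert (by decide), Finset.sum_singleton]
  rw [mul_zero, mul_one, sg_zero, (zmod2_ne_zero _).1 hj0, sg_one]
  ring

lemma even_iff_cast_zero (m : ℕ) : Even m ↔ ((m : ZMod 2)) = 0 := by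
  rw [ZMod.natCast_eq_zero_iff]
  constructor
  · rintro ⟨k, hk⟩; exact ⟨k, by omega⟩
  · rintro ⟨k, hk⟩; exact ⟨k, by omega⟩

lemma even_indicator {n : ℕ} (x : Fin n → ZMod 2) :
    (if Even (hammingNorm x) then (1:ℝ) else 0) = (1 + chi 1 x) / 2 := by
  rw [chi_one_left]
  by_cases h : Even (hammingNorm x)
  · rw [if_pos h, (even_iff_cast_zero _).1 h, sg_zero]
    norm_num
  · rw [if_neg h]
    have : ((hammingNorm x : ZMod 2)) = 1 := by
      rcases zmod2_cases ((hammingNorm x : ZMod 2)) with h0 | h1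
      · exact absurd ((even_iff_cast_zero _).2 h0) h
      · exact h1
    rw [this, sg_one]
    norm_num

lemma sum_chi_even {n : ℕ} (z : Fin n → ZMod 2) (hz : z ≠ 0) (hz1 : z ≠ 1) :
    ∑ x ∈ Finset.univ.filter (fun x : Fin n → ZMod 2 => Even (hammingNorm x)), chi z x = 0 := by
  have h1 : ∑ x ∈ Finset.univ.filter (fun x : Fin n → ZMod 2 => Even (hammingNorm x)), chi z x
      = ∑ x : Fin n → ZMod 2, chi z x * ((1 + chi 1 x) / 2) := by
    rw [Finset.sum_filter]
    refine Finset.sum_congr rfl fun x _ => ?_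
    rw [← even_indicator]
    by_cases h : Even (hammingNorm x) <;> simp [h]
  rw [h1]
  have h2 : ∀ x : Fin n → ZMod 2, chi z x * ((1 + chi 1 x) / 2)
      = chi z x / 2 + chi (z + 1) x / 2 := by
    intro x
    rw [chi_add_left]
    ring
  rw [Finset.sum_congr rfl (fun x _ => h2 x), Finset.sum_add_distrib]
  rw [← Finset.sum_div, ← Finset.sum_div, sum_chi_univ z hz, sum_chi_univ (z + 1) ?_]
  · norm_num
  · intro h
    apply hz1
    have : z + 1 + 1 = (0 : Fin n → ZMod 2) + 1 := by rw [h]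
    rw [zero_add, add_assoc] at this
    rw [← this]
    funext j
    simp [zmod2_add_self]

lemma card_even {n : ℕ} (hn : 1 ≤ n) :
    (Finset.univ.filter (fun x : Fin n → ZMod 2 => Even (hammingNorm x))).card = 2 ^ (n-1) := by
  have hreal : ((Finset.univ.filter (fun x : Fin n → ZMod 2 => Even (hammingNorm x))).card : ℝ)
      = ((2 ^ (n-1) : ℕ) : ℝ) := by
    rw [Finset.card_eq_sum_ones, Nat.cast_sum]
    have h1 : ∑ x ∈ Finset.univ.filter (fun x : Fin n → ZMod 2 => Even (hammingNorm x)), ((1:ℕ):ℝ)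
        = ∑ x : Fin n → ZMod 2, (1 + chi 1 x) / 2 := by
      rw [Finset.sum_filter]
      refine Finset.sum_congr rfl fun x _ => ?_
      rw [← even_indicator]
      by_cases h : Even (hammingNorm x) <;> simp [h]
    rw [h1]
    have h2 : ∀ x : Fin n → ZMod 2, (1 + chi 1 x) / 2 = 1/2 + chi 1 x / 2 := fun x => by ring
    have hone : (1 : Fin n → ZMod 2) ≠ 0 := by
      intro h
      have := congrFun h ⟨0, by omega⟩
      simp at this
    rw [Finset.sum_congr rfl (fun x _ => h2 x), Finset.sum_add_distrib, ← Finset.sum_div, ← Finset.sum_div,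
      sum_chi_univ (1 : Fin n → ZMod 2) hone, Finset.sum_const, Finset.card_univ]
    have hcard : Fintype.card (Fin n → ZMod 2) = 2^n := by simp
    have hp : (2:ℝ)^n = 2^(n-1) * 2 := by
      rw [← pow_succ]
      congr 1
      omega
    rw [hcard, nsmul_eq_mul]
    push_cast
    rw [hp]
    ring
  exact_mod_cast hreal

lemma zmod2_sub (a b : ZMod 2) : a - b = a + b := by
  rcases zmod2_cases a with h | h <;> rcases zmod2_cases b with h' | h' <;>
    subst h <;> subst h' <;> decide

lemma norm_one {n : ℕ} : hammingNorm (1 : Fin n → ZMod 2) = n := by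
  rw [norm_filter]
  have : Finset.univ.filter (fun k => (1 : Fin n → ZMod 2) k ≠ 0) = Finset.univ := by
    refine Finset.filter_true_of_mem fun k _ => ?_
    simp
  rw [this, Finset.card_univ, Fintype.card_fin]

lemma norm_antip {n : ℕ} (x : Fin n → ZMod 2) :
    hammingNorm (antip x) = n - hammingNorm x := by
  rw [norm_filter]
  have : Finset.univ.filter (fun k => (antip x) k ≠ 0) = Finset.univ.filter (fun k => x k = 0) := by
    ext k
    simp only [Finset.mem_filter, Finset.mem_univ, true_and, antip]
    exact (Finset.mem_filter.trans (and_iff_right (Finset.mem_univ k))).trans (zmod2_add_one_ne (x k))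
  rw [this, card_zero_filter]

lemma antip_antip {n : ℕ} (x : Fin n → ZMod 2) : antip (antip x) = x := by
  funext j
  show x j + 1 + 1 = x j
  rw [add_assoc, zmod2_add_self, add_zero]


/-- halving the even-weight code of length `n = 2ℓ` produces a tight
`(ℓ−1, ℓ−1)`-design of cardinality `2^{2ℓ−2} = ∑_{i=0}^{ℓ−1} C(2ℓ−1, i)`. -/
theorem stmt_4 (l : ℕ) (hl : 2 ≤ l)
    (C : Finset (Fin (2 * l) → ZMod 2))
    (hCD : C ⊆ Finset.univ.filter (fun x : Fin (2 * l) → ZMod 2 => Even (hammingNorm x)))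
    (hpair : ∀ x ∈ Finset.univ.filter (fun x : Fin (2 * l) → ZMod 2 => Even (hammingNorm x)),
        Xor' (x ∈ C) (antip x ∈ C)) :
    IsKKDesign (2 * l) (l - 1) C ∧ C.card = 2 ^ (2 * l - 2) ∧
      C.card = ∑ i ∈ Finset.range l, (2 * l - 1).choose i := by
  set D := Finset.univ.filter (fun x : Fin (2 * l) → ZMod 2 => Even (hammingNorm x)) with hDdef
  have hDmem : ∀ x : Fin (2 * l) → ZMod 2, x ∈ D ↔ Even (hammingNorm x) := by
    intro x; rw [hDdef, Finset.mem_filter]; simp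
  have hantipD : ∀ x ∈ D, antip x ∈ D := by
    intro x hx
    rw [hDmem] at hx ⊢
    rw [norm_antip]
    obtain ⟨k, hk⟩ := hx
    have hle := norm_le x
    exact ⟨l - k, by omega⟩
  have hCtoD : ∀ x ∈ C, antip x ∈ D \ C := by
    intro x hx
    rw [Finset.mem_sdiff]
    refine ⟨hantipD x (hCD hx), ?_⟩
    rcases hpair x (hCD hx) with ⟨_, h⟩ | ⟨_, h⟩
    · exact h
    · exact absurd hx h
  have hDtoC : ∀ y ∈ D \ C, antip y ∈ C := by
    intro y hy
    rw [Finset.mem_sdiff] at hy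
    rcases hpair y hy.1 with ⟨h1, _⟩ | ⟨h1, _⟩
    · exact absurd h1 hy.2
    · exact h1
  -- cardinality of the complement half
  have hcard_eq : (D \ C).card = C.card := by
    symm
    refine Finset.card_bij' (fun a _ => antip a) (fun b _ => antip b) hCtoD hDtoC ?_ ?_
    · intro a _; exact antip_antip a
    · intro b _; exact antip_antip b
  have hDcard : D.card = 2 ^ (2 * l - 1) := card_even (by omega)
  have hsplitcard : (D \ C).card + C.card = D.card := Finset.card_sdiff_add_card_eq_card hCD
  have hpow : 2 ^ (2 * l - 1) = 2 * 2 ^ (2 * l - 2) := by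
    rw [← pow_succ']
    congr 1
    omega
  have hCcard : C.card = 2 ^ (2 * l - 2) := by omega
  -- key character sum vanishing
  have key : ∀ z : Fin (2 * l) → ZMod 2, Even (hammingNorm z) → z ≠ 0 → z ≠ 1 →
      ∑ x ∈ C, chi z x = 0 := by
    intro z hev hz0 hz1
    have hchi : ∀ x : Fin (2 * l) → ZMod 2, chi z (antip x) = chi z x := by
      intro x
      have h1 : antip x = x + 1 := rfl
      rw [h1, chi_add_right, chi_one_right, (even_iff_cast_zero _).1 hev, sg_zero, mul_one]
    have hsum_eq : ∑ x ∈ C, chi z x = ∑ x ∈ D \ C, chi z x := by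
      refine Finset.sum_bij' (fun a _ => antip a) (fun b _ => antip b) hCtoD hDtoC ?_ ?_ ?_
      · intro a _; exact antip_antip a
      · intro b _; exact antip_antip b
      · intro a _; exact (hchi a).symm
    have hsplit : ∑ x ∈ D \ C, chi z x + ∑ x ∈ C, chi z x = ∑ x ∈ D, chi z x :=
      Finset.sum_sdiff hCD
    rw [hDdef] at hsplit
    rw [sum_chi_even z hz0 hz1] at hsplit
    rw [← hsum_eq] at hsplit
    linarith
  -- moments vanish
  have hmom : ∀ j : ℕ, 1 ≤ j → j ≤ l - 1 → moment (2 * l) C (2 * j) = 0 := by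
    intro j hj1 hjl
    have hilt : 2 * j < 2 * l := by omega
    have hkr : ∀ x y : Fin (2 * l) → ZMod 2,
        kraw (2 * l) (2 * j) (ip (2 * l) x y) = FF (2 * l) (2 * j) (x + y) / ((2 * l).choose (2 * j) : ℝ) := by
      intro x y
      have hxy : x - y = x + y := by
        funext k
        exact zmod2_sub (x k) (y k)
      have hip : ip (2 * l) x y = 1 - 2 * (hammingNorm (x + y) : ℝ) / (2 * l : ℕ) := by
        rw [ip, hammingDist_eq_hammingNorm, show -x = x from funext fun k => ZMod.neg_eq_self_mod_two (x k)]
      rw [hip]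
      exact kraw_eq (x + y) (2 * j) hilt
    have hm : moment (2 * l) C (2 * j)
        = (∑ z ∈ Finset.univ.filter (fun z : Fin (2 * l) → ZMod 2 => hammingNorm z = 2 * j),
            (∑ x ∈ C, chi z x) * (∑ y ∈ C, chi z y)) / ((2 * l).choose (2 * j) : ℝ) := by
      rw [moment]
      rw [Finset.sum_congr rfl (fun x _ => Finset.sum_congr rfl (fun y _ => hkr x y))]
      rw [Finset.sum_congr rfl (fun x (_ : x ∈ C) => (Finset.sum_div _ _ _).symm), ← Finset.sum_div]
      congr 1
      have e1 : ∀ x ∈ C, ∑ y ∈ C, FF (2 * l) (2 * j) (x + y)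
          = ∑ z ∈ Finset.univ.filter (fun z : Fin (2 * l) → ZMod 2 => hammingNorm z = 2 * j),
              ∑ y ∈ C, chi z x * chi z y := by
        intro x _
        rw [Finset.sum_comm]
        refine Finset.sum_congr rfl fun y _ => ?_
        rw [FF]
        exact Finset.sum_congr rfl fun z _ => chi_add_right z x y
      rw [Finset.sum_congr rfl e1, Finset.sum_comm]
      refine Finset.sum_congr rfl fun z _ => ?_
      rw [Finset.sum_mul]
      exact Finset.sum_congr rfl fun x _ => (Finset.mul_sum _ _ _).symm
    rw [hm]
    rw [Finset.sum_eq_zero]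
    · exact zero_div _
    · intro z hz
      simp only [Finset.mem_filter, Finset.mem_univ, true_and] at hz
      have hz0 : z ≠ 0 := by
        intro h
        rw [h, (norm_eq_zero_iff (0 : Fin (2*l) → ZMod 2)).2 rfl] at hz
        omega
      have hz1 : z ≠ 1 := by
        intro h
        rw [h, _root_.norm_one] at hz
        omega
      rw [key z (by rw [hz]; exact ⟨j, by omega⟩) hz0 hz1, zero_mul]
  -- nonemptiness
  have hne : C.Nonempty := by
    have h0D : (0 : Fin (2 * l) → ZMod 2) ∈ D := by
      rw [hDmem, (norm_eq_zero_iff (0 : Fin (2*l) → ZMod 2)).2 rfl]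
      exact Even.zero
    rcases hpair 0 h0D with ⟨h1, _⟩ | ⟨h1, _⟩
    · exact ⟨0, h1⟩
    · exact ⟨antip 0, h1⟩
  -- choose sum
  have hchoose : ∑ i ∈ Finset.range l, (2 * l - 1).choose i = 2 ^ (2 * l - 2) := by
    have h := Nat.sum_range_choose_halfway (l - 1)
    rw [show l - 1 + 1 = l by omega, show 2 * (l - 1) + 1 = 2 * l - 1 by omega] at h
    rw [h, show (4 : ℕ) = 2 ^ 2 from rfl, ← pow_mul]
    congr 1
    omega
  exact ⟨⟨hne, hmom⟩, hCcard, by rw [hchoose, hCcard]⟩
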